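/- The expected revenue function R_m(n, p) = p·Σ_{j=0}^n min(m,j) C(n,j)(1-p)^j p^{n-j} is monotone nondecreasing in the number of buyers n (for fixed m and p). -/
import Mathlib


open Finset

/-- Expected revenue of the fixed-price auction selling `m` items at price `p`
to `n` buyers with i.i.d. Uniform[0,1] valuations. -/
noncomputable def R (m n : ℕ) (p : ℝ) : ℝ :=
  p * ∑ j ∈ range (n + 1),
    (min m j : ℝ) * (n.choose j : ℝ) * (1 - p) ^ j * p ^ (n - j)

/-- The expected revenue is monotone nondecreasing in the number of buyers `n`
(for fixed `m` and `p ∈ [0,1]`). -/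
theorem stmt_8 (m : ℕ) (p : ℝ) (hp : p ∈ Set.Icc (0:ℝ) 1) :
    Monotone (fun n : ℕ => R m n p) := by
  obtain ⟨hp0, hp1⟩ := hp
  set q : ℝ := 1 - p with hqdef
  have hq0 : (0 : ℝ) ≤ q := by simp only [hqdef]; linarith
  apply monotone_nat_of_le_succ
  intro n
  simp only [R]
  apply mul_le_mul_of_nonneg_left _ hp0
  have h0 : min (m:ℝ) 0 = 0 := min_eq_right (by positivity)
  -- shifted-choose sum identity
  have hshift : ∑ j ∈ range (n+1),
      min (m:ℝ) ((j:ℝ)+1) * (n.choose (j+1) : ℝ) * q ^ (j+1) * p ^ (n - j)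
      = p * ∑ j ∈ range (n + 1),
        min (m:ℝ) (j:ℝ) * (n.choose j : ℝ) * q ^ j * p ^ (n - j) := by
    rw [Finset.sum_range_succ'
      (fun j => min (m:ℝ) (j:ℝ) * (n.choose j : ℝ) * q ^ j * p ^ (n - j)) n]
    rw [Finset.sum_range_succ]
    simp only [Nat.choose_succ_self, Nat.cast_zero, Nat.cast_ofNat, mul_zero, zero_mul,
      add_zero, h0]
    rw [Finset.mul_sum]
    apply Finset.sum_congr rfl
    intro j hj
    have hj' : j < n := Finset.mem_range.mp hj
    have hexp : n - j = (n - (j+1)) + 1 := by omega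
    rw [hexp, pow_succ]
    push_cast
    ring
  -- key recursion
  have key : ∑ j ∈ range (n + 1 + 1),
      min (m:ℝ) (j:ℝ) * ((n+1).choose j : ℝ) * q ^ j * p ^ (n + 1 - j)
      = p * ∑ j ∈ range (n + 1), min (m:ℝ) (j:ℝ) * (n.choose j : ℝ) * q ^ j * p ^ (n - j)
      + q * ∑ j ∈ range (n + 1),
          min (m:ℝ) ((j:ℝ)+1) * (n.choose j : ℝ) * q ^ j * p ^ (n - j) := by
    rw [Finset.sum_range_succ'
      (fun j => min (m:ℝ) (j:ℝ) * ((n+1).choose j : ℝ) * q ^ j * p ^ (n + 1 - j)) (n+1)]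
    have hz : min (m:ℝ) ((0:ℕ):ℝ) * ((n+1).choose 0 : ℝ) * q ^ 0 * p ^ (n + 1 - 0) = 0 := by
      rw [Nat.cast_zero, h0]; ring
    rw [hz, add_zero]
    have hsum : ∑ j ∈ range (n+1),
        min (m:ℝ) ((j+1 : ℕ):ℝ) * ((n+1).choose (j+1) : ℝ) * q ^ (j+1) * p ^ (n + 1 - (j+1))
        = ∑ j ∈ range (n+1),
          (min (m:ℝ) ((j:ℝ)+1) * (n.choose (j+1) : ℝ) * q ^ (j+1) * p ^ (n - j)
          + q * (min (m:ℝ) ((j:ℝ)+1) * (n.choose j : ℝ) * q ^ j * p ^ (n - j))) := by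
      apply Finset.sum_congr rfl
      intro j hj
      have hc : (n+1).choose (j+1) = n.choose j + n.choose (j+1) := Nat.choose_succ_succ n j
      have hexp : n + 1 - (j+1) = n - j := by omega
      rw [hc, hexp]
      push_cast
      ring
    rw [hsum, Finset.sum_add_distrib, hshift, Finset.mul_sum, Finset.mul_sum]
  rw [key]
  have hT : ∑ j ∈ range (n + 1), min (m:ℝ) (j:ℝ) * (n.choose j : ℝ) * q ^ j * p ^ (n - j)
      ≤ ∑ j ∈ range (n + 1), min (m:ℝ) ((j:ℝ)+1) * (n.choose j : ℝ) * q ^ j * p ^ (n - j) := by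
    apply Finset.sum_le_sum
    intro j hj
    have hmin : min (m:ℝ) (j:ℝ) ≤ min (m:ℝ) ((j:ℝ)+1) := min_le_min le_rfl (by linarith)
    have hfac : (0:ℝ) ≤ (n.choose j : ℝ) * q ^ j * p ^ (n - j) :=
      mul_nonneg (mul_nonneg (by positivity) (pow_nonneg hq0 _)) (pow_nonneg hp0 _)
    calc min (m:ℝ) (j:ℝ) * (n.choose j : ℝ) * q ^ j * p ^ (n - j)
        = min (m:ℝ) (j:ℝ) * ((n.choose j : ℝ) * q ^ j * p ^ (n - j)) := by ring
      _ ≤ min (m:ℝ) ((j:ℝ)+1) * ((n.choose j : ℝ) * q ^ j * p ^ (n - j)) :=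
          mul_le_mul_of_nonneg_right hmin hfac
      _ = min (m:ℝ) ((j:ℝ)+1) * (n.choose j : ℝ) * q ^ j * p ^ (n - j) := by ring
  have hS : (0:ℝ) ≤ ∑ j ∈ range (n + 1),
      min (m:ℝ) (j:ℝ) * (n.choose j : ℝ) * q ^ j * p ^ (n - j) := by
    apply Finset.sum_nonneg
    intro j hj
    have : (0:ℝ) ≤ min (m:ℝ) (j:ℝ) := le_min (by positivity) (by positivity)
    exact mul_nonneg (mul_nonneg (mul_nonneg this (by positivity)) (pow_nonneg hq0 _))
      (pow_nonneg hp0 _)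
  nlinarith [hT, hS, hq0, hp0]
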